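/- Let d ≥ 1 be an integer, ε ∈ (0,1), and let z be a real number with z ≥ √(d/(2ε)). Let x, y ∈ {0,1}^d ⊂ ℝ^d and let H = ‖x − y‖² denote their squared Euclidean distance (equal to their Hamming distance). Then √H·(1 − ε/12) ≤ z·arcosh(1 + H/(2z²)) ≤ √H. -/

import Mathlib

/-- The inverse hyperbolic cosine. -/
noncomputable def arcosh (x : ℝ) : ℝ := Real.log (x + Real.sqrt (x ^ 2 - 1))


-- upper bound: arcosh(1+t) ≤ √(2t) for t ≥ 0
lemma arcosh_upper {t : ℝ} (ht : 0 ≤ t) :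
    Real.log (1 + t + Real.sqrt (t ^ 2 + 2 * t)) ≤ Real.sqrt (2 * t) := by
  set s := Real.sqrt (2 * t) with hs
  have hs0 : 0 ≤ s := Real.sqrt_nonneg _
  have hs2 : s ^ 2 = 2 * t := Real.sq_sqrt (by linarith)
  have hA : (0:ℝ) < 1 + t + Real.sqrt (t ^ 2 + 2 * t) := by
    have := Real.sqrt_nonneg (t ^ 2 + 2 * t); linarith
  rw [Real.log_le_iff_le_exp hA]
  have hexp : ∑ i ∈ Finset.range 4, s ^ i / (Nat.factorial i) ≤ Real.exp s :=
    Real.sum_le_exp_of_nonneg hs0 4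
  have hsum : ∑ i ∈ Finset.range 4, s ^ i / (Nat.factorial i)
      = 1 + s + s ^ 2 / 2 + s ^ 3 / 6 := by
    simp only [Finset.sum_range_succ, Finset.sum_range_zero, Nat.factorial]
    push_cast; ring
  have hsqrt : Real.sqrt (t ^ 2 + 2 * t) ≤ s + s ^ 3 / 6 := by
    have h1 : t ^ 2 + 2 * t ≤ (s + s ^ 3 / 6) ^ 2 := by nlinarith [sq_nonneg s, sq_nonneg (s^2)]
    calc Real.sqrt (t ^ 2 + 2 * t) ≤ Real.sqrt ((s + s ^ 3 / 6) ^ 2) := Real.sqrt_le_sqrt h1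
      _ = s + s ^ 3 / 6 := Real.sqrt_sq (by positivity)
  rw [hsum] at hexp
  nlinarith [hexp, hsqrt]

-- the key polynomial inequality
lemma poly_key {v : ℝ} (hv : 0 ≤ v) (hv2 : v ^ 2 ≤ 1 / 2) :
    1 + (v - v ^ 3 / 6) + (v - v ^ 3 / 6) ^ 2 / 2 + (v - v ^ 3 / 6) ^ 3 / 6
      + (v - v ^ 3 / 6) ^ 4 / 24 + (v - v ^ 3 / 6) ^ 5 / 100
      ≤ 1 + v + v ^ 2 / 2 - v ^ 4 / 8 := by
  have hv1 : v ≤ 1 := by nlinarith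
  have h7 : v ^ 7 ≤ v ^ 5 := pow_le_pow_of_le_one hv hv1 (by norm_num)
  have h8 : v ^ 8 ≤ v ^ 5 := pow_le_pow_of_le_one hv hv1 (by norm_num)
  have h9 : v ^ 9 ≤ v ^ 5 := pow_le_pow_of_le_one hv hv1 (by norm_num)
  have h12 : v ^ 12 ≤ v ^ 5 := pow_le_pow_of_le_one hv hv1 (by norm_num)
  have h13 : v ^ 13 ≤ v ^ 5 := pow_le_pow_of_le_one hv hv1 (by norm_num)
  have key : (0:ℝ) ≤ 11/150 * v ^ 5 + 1/72 * v ^ 6 - 1/180 * v ^ 7 - 1/144 * v ^ 8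
      - 13/6480 * v ^ 9 + 1/1296 * v ^ 10 + 1/2160 * v ^ 11 - 1/31104 * v ^ 12
      - 1/25920 * v ^ 13 + 1/777600 * v ^ 15 := by
    have n6 : (0:ℝ) ≤ v ^ 6 := pow_nonneg hv 6
    have n10 : (0:ℝ) ≤ v ^ 10 := pow_nonneg hv 10
    have n11 : (0:ℝ) ≤ v ^ 11 := pow_nonneg hv 11
    have n15 : (0:ℝ) ≤ v ^ 15 := pow_nonneg hv 15
    have n5 : (0:ℝ) ≤ v ^ 5 := pow_nonneg hv 5
    linarith
  have hD : 1 + (v - v ^ 3 / 6) + (v - v ^ 3 / 6) ^ 2 / 2 + (v - v ^ 3 / 6) ^ 3 / 6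
      + (v - v ^ 3 / 6) ^ 4 / 24 + (v - v ^ 3 / 6) ^ 5 / 100
      = (1 + v + v ^ 2 / 2 - v ^ 4 / 8)
        - (11/150 * v ^ 5 + 1/72 * v ^ 6 - 1/180 * v ^ 7 - 1/144 * v ^ 8
          - 13/6480 * v ^ 9 + 1/1296 * v ^ 10 + 1/2160 * v ^ 11 - 1/31104 * v ^ 12
          - 1/25920 * v ^ 13 + 1/777600 * v ^ 15) := by ring
  linarith [key, hD]

-- lower bound: √(2t)(1 - t/12) ≤ arcosh(1+t) for 0 ≤ t ≤ 1
set_option maxHeartbeats 1000000 in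
lemma arcosh_lower {t : ℝ} (ht : 0 ≤ t) (ht1 : t ≤ 1) :
    Real.sqrt (2 * t) * (1 - t / 12) ≤ Real.log (1 + t + Real.sqrt (t ^ 2 + 2 * t)) := by
  set v := Real.sqrt (t / 2) with hvdef
  have hv0 : 0 ≤ v := Real.sqrt_nonneg _
  have hv2 : v ^ 2 = t / 2 := Real.sq_sqrt (by linarith)
  have hv2' : v ^ 2 ≤ 1 / 2 := by rw [hv2]; linarith
  have hr0 : 0 ≤ Real.sqrt (v ^ 2 + 1) := Real.sqrt_nonneg _
  have hr2 : (Real.sqrt (v ^ 2 + 1)) ^ 2 = v ^ 2 + 1 := Real.sq_sqrt (by positivity)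
  set r := Real.sqrt (v ^ 2 + 1) with hrdef
  have hB0 : (0:ℝ) < v + r := by nlinarith
  -- identity: 1 + t + √(t²+2t) = (v + r)²
  have hsq : Real.sqrt (t ^ 2 + 2 * t) = 2 * v * r := by
    rw [show t ^ 2 + 2 * t = (2 * v * r) ^ 2 by nlinarith]
    exact Real.sqrt_sq (by positivity)
  have hid : 1 + t + Real.sqrt (t ^ 2 + 2 * t) = (v + r) ^ 2 := by
    rw [hsq]; nlinarith
  have h2v : Real.sqrt (2 * t) = 2 * v := by
    rw [show 2 * t = (2 * v) ^ 2 by nlinarith]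
    exact Real.sqrt_sq (by positivity)
  rw [hid, h2v]
  rw [show ((v + r) ^ 2 : ℝ) = (v + r) ^ (2:ℕ) from rfl, Real.log_pow]
  -- goal: 2v(1 - t/12) ≤ 2 log(v+r); suffices v - v³/6 ≤ log (v+r)
  have hu0 : 0 ≤ v - v ^ 3 / 6 := by nlinarith
  have hu1 : v - v ^ 3 / 6 ≤ 1 := by nlinarith
  have hlog : v - v ^ 3 / 6 ≤ Real.log (v + r) := by
    rw [Real.le_log_iff_exp_le hB0]
    have hb := Real.exp_bound' hu0 hu1 (n := 5) (by norm_num)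
    have hsum5 : (∑ m ∈ Finset.range 5, (v - v ^ 3 / 6) ^ m / (Nat.factorial m))
        + (v - v ^ 3 / 6) ^ 5 * (5 + 1) / ((Nat.factorial 5) * 5)
        = 1 + (v - v ^ 3 / 6) + (v - v ^ 3 / 6) ^ 2 / 2 + (v - v ^ 3 / 6) ^ 3 / 6
          + (v - v ^ 3 / 6) ^ 4 / 24 + (v - v ^ 3 / 6) ^ 5 / 100 := by
      simp only [Finset.sum_range_succ, Finset.sum_range_zero, Nat.factorial]
      push_cast; ring
    have hrlow : 1 + v ^ 2 / 2 - v ^ 4 / 8 ≤ r := by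
      nlinarith [sq_nonneg (r - (1 + v ^ 2 / 2 - v ^ 4 / 8)), sq_nonneg v, sq_nonneg (v^2), sq_nonneg (v^3), pow_nonneg hv0 6, pow_nonneg hv0 8]
    calc Real.exp (v - v ^ 3 / 6)
        ≤ _ := hb
      _ = _ := hsum5
      _ ≤ 1 + v + v ^ 2 / 2 - v ^ 4 / 8 := poly_key hv0 hv2'
      _ ≤ v + r := by linarith
  have ht12 : t / 12 = v ^ 2 / 6 := by rw [hv2]; ring
  rw [ht12]
  push_cast
  nlinarith [hlog]

/-- Embedding-distortion estimate at the core of the lower bound (Theorem 1.7):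
placing two Hamming-cube points at height `z ≥ √(d/(2ε))` in the half-space model,
the scaled hyperbolic distance `z·arcosh(1 + H/(2z²))` approximates `√H`, where
`H = ‖x − y‖²` is the squared Euclidean (i.e. Hamming) distance. -/
theorem hamming_embedding_estimate (d : ℕ) (hd : 1 ≤ d) (ε : ℝ) (hε0 : 0 < ε)
    (hε1 : ε < 1) (z : ℝ) (hz : Real.sqrt (d / (2 * ε)) ≤ z)
    (x y : EuclideanSpace ℝ (Fin d)) (hx : ∀ i, x i = 0 ∨ x i = 1)
    (hy : ∀ i, y i = 0 ∨ y i = 1) :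
    Real.sqrt (‖x - y‖ ^ 2) * (1 - ε / 12) ≤
        z * arcosh (1 + ‖x - y‖ ^ 2 / (2 * z ^ 2)) ∧
      z * arcosh (1 + ‖x - y‖ ^ 2 / (2 * z ^ 2)) ≤ Real.sqrt (‖x - y‖ ^ 2) := by
  have hdpos : (0:ℝ) < (d:ℝ) := by exact_mod_cast Nat.lt_of_lt_of_le Nat.zero_lt_one hd
  have hz0 : 0 < z := lt_of_lt_of_le (Real.sqrt_pos.mpr (by positivity)) hz
  have hz2 : (d:ℝ) / (2 * ε) ≤ z ^ 2 := by
    have h := pow_le_pow_left₀ (Real.sqrt_nonneg _) hz 2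
    rwa [Real.sq_sqrt (by positivity)] at h
  set H : ℝ := ‖x - y‖ ^ 2 with hHdef
  have hH0 : 0 ≤ H := sq_nonneg _
  have hHd : H ≤ d := by
    have hnorm : ‖x - y‖ = Real.sqrt (∑ i, ‖(x - y) i‖ ^ 2) :=
      EuclideanSpace.norm_eq _
    have hH : H = ∑ i, ‖(x - y) i‖ ^ 2 := by
      rw [hHdef, hnorm, Real.sq_sqrt (by positivity)]
    rw [hH]
    calc (∑ i, ‖(x - y) i‖ ^ 2) ≤ ∑ _i : Fin d, (1:ℝ) := by
          apply Finset.sum_le_sum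
          intro i _
          have : (x - y) i = x i - y i := rfl
          rw [this, Real.norm_eq_abs, sq_abs]
          rcases hx i with h1 | h1 <;> rcases hy i with h2 | h2 <;>
            rw [h1, h2] <;> norm_num
      _ = d := by simp
  set t : ℝ := H / (2 * z ^ 2) with htdef
  have ht0 : 0 ≤ t := by positivity
  have htε : t ≤ ε := by
    rw [htdef, div_le_iff₀ (by positivity)]
    have : (d:ℝ) ≤ z ^ 2 * (2 * ε) := by
      rw [div_le_iff₀ (by positivity)] at hz2
      linarith
    nlinarith
  have ht1 : t ≤ 1 := le_trans htε hε1.le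
  have harc : arcosh (1 + t) = Real.log (1 + t + Real.sqrt (t ^ 2 + 2 * t)) := by
    rw [arcosh]
    congr 2
    ring
  -- z * √(2t) = √H
  have hzs : z * Real.sqrt (2 * t) = Real.sqrt H := by
    rw [show H = (z * Real.sqrt (2 * t)) ^ 2 by
      rw [mul_pow, Real.sq_sqrt (by linarith)]
      field_simp [htdef]
      rw [htdef]; field_simp]
    rw [Real.sqrt_sq (by positivity)]
  constructor
  · -- lower bound
    have hlow := arcosh_lower ht0 ht1
    have h1 : Real.sqrt H * (1 - ε / 12) ≤ Real.sqrt H * (1 - t / 12) := by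
      apply mul_le_mul_of_nonneg_left _ (Real.sqrt_nonneg _)
      linarith
    have h2 : Real.sqrt H * (1 - t / 12) = z * (Real.sqrt (2 * t) * (1 - t / 12)) := by
      rw [← hzs]; ring
    have h3 : z * (Real.sqrt (2 * t) * (1 - t / 12)) ≤ z * arcosh (1 + t) := by
      rw [harc]
      exact mul_le_mul_of_nonneg_left hlow hz0.le
    calc Real.sqrt H * (1 - ε / 12) ≤ _ := h1
      _ = _ := h2
      _ ≤ z * arcosh (1 + t) := h3
  · -- upper bound
    have hup := arcosh_upper ht0
    calc z * arcosh (1 + t) = z * Real.log (1 + t + Real.sqrt (t ^ 2 + 2 * t)) := by rw [harc]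
      _ ≤ z * Real.sqrt (2 * t) := mul_le_mul_of_nonneg_left hup hz0.le
      _ = Real.sqrt H := hzs
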